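/- The limit of log((sin x)/x) / log((π² − x²)/π²) as x tends to 0 from the right equals π²/6, and the limit as x tends to π from the left equals 1. -/

import Mathlib

open Real Topology Filter

-- log y / (y - 1) → 1 as y → 1 (y ≠ 1)
lemma aux_log_slope : Tendsto (fun y : ℝ => Real.log y / (y - 1)) (𝓝[≠] (1:ℝ)) (𝓝 1) := by
  have h := (Real.hasDerivAt_log one_ne_zero)
  rw [hasDerivAt_iff_tendsto_slope] at h
  have : (fun y : ℝ => Real.log y / (y - 1)) = slope Real.log 1 := by
    funext y
    simp [slope_def_field, Real.log_one]
  rw [this]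
  simpa using h

-- sin y / y → 1 as y → 0 (y ≠ 0)
lemma aux_sin_slope : Tendsto (fun y : ℝ => Real.sin y / y) (𝓝[≠] (0:ℝ)) (𝓝 1) := by
  have h := (Real.hasDerivAt_sin 0)
  rw [hasDerivAt_iff_tendsto_slope] at h
  have : (fun y : ℝ => Real.sin y / y) = slope Real.sin 0 := by
    funext y
    simp [slope_def_field]
  rw [this]
  simpa using h

-- (sin x - x)/x^3 → -1/6 as x → 0+
lemma aux_cube : Tendsto (fun x : ℝ => (Real.sin x - x) / x ^ 3) (𝓝[>] (0:ℝ)) (𝓝 (-(1/6))) := by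
  have key : Tendsto (fun x : ℝ => (Real.sin x - x) / x ^ 3 - (-(1/6))) (𝓝[>] (0:ℝ)) (𝓝 0) := by
    have hbound : ∀ᶠ x in 𝓝[>] (0:ℝ),
        ‖(Real.sin x - x) / x ^ 3 - (-(1/6))‖ ≤ x * (5/96) := by
      filter_upwards [Ioo_mem_nhdsGT_of_mem (by norm_num : (0:ℝ) ∈ Set.Ico 0 1)] with x hx
      obtain ⟨hx0, hx1⟩ := hx
      have hx0' : x ≠ 0 := ne_of_gt hx0
      have h1 : |x| ≤ 1 := by rw [abs_of_pos hx0]; exact le_of_lt hx1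
      have hb := Real.sin_bound h1
      have heq : (Real.sin x - x) / x ^ 3 - (-(1/6)) = (Real.sin x - (x - x ^ 3 / 6)) / x ^ 3 := by
        field_simp
        ring
      rw [heq, norm_div]
      rw [abs_of_pos hx0] at hb
      have hx3 : ‖x ^ 3‖ = x ^ 3 := by
        rw [Real.norm_eq_abs, abs_of_pos (pow_pos hx0 3)]
      rw [hx3]
      rw [div_le_iff₀ (pow_pos hx0 3)]
      calc ‖Real.sin x - (x - x ^ 3 / 6)‖ ≤ x ^ 4 * (5/96) := by rw [Real.norm_eq_abs]; nlinarith [hb, pow_pos hx0 4]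
        _ = x * (5/96) * x ^ 3 := by ring
    have hlim : Tendsto (fun x : ℝ => x * (5/96)) (𝓝[>] (0:ℝ)) (𝓝 0) := by
      have : Tendsto (fun x : ℝ => x * (5/96)) (𝓝[>] (0:ℝ)) (𝓝 (0 * (5/96))) :=
        (tendsto_id.mono_left nhdsWithin_le_nhds).mul_const _
      simpa using this
    exact squeeze_zero_norm' hbound hlim
  have := key.add_const (-(1/6))
  simpa using this

theorem stmt_14 :
    Tendsto (fun x : ℝ => Real.log (Real.sin x / x) / Real.log ((π ^ 2 - x ^ 2) / π ^ 2))
        (𝓝[>] 0) (𝓝 (π ^ 2 / 6)) ∧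
      Tendsto (fun x : ℝ => Real.log (Real.sin x / x) / Real.log ((π ^ 2 - x ^ 2) / π ^ 2))
        (𝓝[<] π) (𝓝 1) := by
  have hπ : (0:ℝ) < π := Real.pi_pos
  have hπ2 : (0:ℝ) < π ^ 2 := by positivity
  constructor
  · -- limit at 0+
    -- A x = log(sin x / x) / x^2 → -1/6
    have hmem : Set.Ioo (0:ℝ) 1 ∈ 𝓝[>] (0:ℝ) :=
      Ioo_mem_nhdsGT_of_mem (by norm_num : (0:ℝ) ∈ Set.Ico 0 1)
    have hA : Tendsto (fun x : ℝ => Real.log (Real.sin x / x) / x ^ 2) (𝓝[>] (0:ℝ))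
        (𝓝 (-(1/6))) := by
      have hu : Tendsto (fun x : ℝ => Real.sin x / x) (𝓝[>] (0:ℝ)) (𝓝[≠] (1:ℝ)) := by
        rw [tendsto_nhdsWithin_iff]
        constructor
        · exact aux_sin_slope.mono_left (nhdsWithin_mono _ fun x hx => ne_of_gt hx)
        · filter_upwards [hmem] with x hx
          have := Real.sin_lt hx.1
          have hlt : Real.sin x / x < 1 := (div_lt_one hx.1).mpr this
          exact ne_of_lt hlt
      have h1 : Tendsto (fun x : ℝ => Real.log (Real.sin x / x) / (Real.sin x / x - 1))
          (𝓝[>] (0:ℝ)) (𝓝 1) := aux_log_slope.comp hu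
      have h2 : Tendsto (fun x : ℝ => (Real.sin x / x - 1) / x ^ 2) (𝓝[>] (0:ℝ))
          (𝓝 (-(1/6))) := by
        apply aux_cube.congr'
        filter_upwards [self_mem_nhdsWithin] with x hx
        have hx0 : x ≠ 0 := ne_of_gt hx
        rw [show Real.sin x / x - 1 = (Real.sin x - x) / x by rw [sub_div, div_self hx0],
          div_div]
        ring_nf
      have := h1.mul h2
      rw [one_mul] at this
      apply this.congr'
      filter_upwards [hmem] with x hx
      have hx0 : (0:ℝ) < x := hx.1
      have hne : Real.sin x / x - 1 ≠ 0 := by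
        have := Real.sin_lt hx0
        have hlt : Real.sin x / x < 1 := (div_lt_one hx0).mpr this
        exact sub_ne_zero_of_ne (ne_of_lt hlt)
      have hne2 : Real.sin x - x ≠ 0 := ne_of_lt (by linarith [Real.sin_lt hx0])
      field_simp
    -- B x = log((π²-x²)/π²) / x^2 → -1/π²
    have hB : Tendsto (fun x : ℝ => Real.log ((π ^ 2 - x ^ 2) / π ^ 2) / x ^ 2) (𝓝[>] (0:ℝ))
        (𝓝 (-(1/π ^ 2))) := by
      have hw : Tendsto (fun x : ℝ => (π ^ 2 - x ^ 2) / π ^ 2) (𝓝[>] (0:ℝ)) (𝓝[≠] (1:ℝ)) := by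
        rw [tendsto_nhdsWithin_iff]
        constructor
        · have : Tendsto (fun x : ℝ => (π ^ 2 - x ^ 2) / π ^ 2) (𝓝 0) (𝓝 ((π ^ 2 - 0 ^ 2) / π ^ 2)) := by
            apply Tendsto.div_const
            exact (tendsto_const_nhds.sub ((continuous_pow 2).tendsto 0))
          have h0 : ((π:ℝ) ^ 2 - 0 ^ 2) / π ^ 2 = 1 := by field_simp; ring
          rw [h0] at this
          exact this.mono_left nhdsWithin_le_nhds
        · filter_upwards [self_mem_nhdsWithin] with x hx
          have hx2 : (0:ℝ) < x ^ 2 := pow_pos hx 2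
          have : (π ^ 2 - x ^ 2) / π ^ 2 < 1 := by
            rw [div_lt_one hπ2]; linarith
          exact ne_of_lt this
      have h1 : Tendsto (fun x : ℝ => Real.log ((π ^ 2 - x ^ 2) / π ^ 2) /
          ((π ^ 2 - x ^ 2) / π ^ 2 - 1)) (𝓝[>] (0:ℝ)) (𝓝 1) := aux_log_slope.comp hw
      have h2 : Tendsto (fun x : ℝ => ((π ^ 2 - x ^ 2) / π ^ 2 - 1) / x ^ 2) (𝓝[>] (0:ℝ))
          (𝓝 (-(1/π ^ 2))) := by
        apply tendsto_const_nhds.congr'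
        filter_upwards [self_mem_nhdsWithin] with x hx
        have hx0 : x ≠ 0 := ne_of_gt hx
        field_simp
        ring
      have := h1.mul h2
      rw [one_mul] at this
      apply this.congr'
      filter_upwards [hmem] with x hx
      have hx0 : (0:ℝ) < x := hx.1
      have hxπ : x < π := lt_of_lt_of_le hx.2 (by linarith [Real.pi_gt_three])
      have hne : (π ^ 2 - x ^ 2) / π ^ 2 - 1 ≠ 0 := by
        have hx2 : (0:ℝ) < x ^ 2 := pow_pos hx0 2
        have : (π ^ 2 - x ^ 2) / π ^ 2 < 1 := by rw [div_lt_one hπ2]; linarith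
        exact sub_ne_zero_of_ne (ne_of_lt this)
      field_simp
    have hBne : -(1/π ^ 2) ≠ 0 := by
      have : (0:ℝ) < 1/π ^ 2 := by positivity
      simp only [neg_ne_zero]
      exact ne_of_gt this
    have := hA.div hB hBne
    have hval : -(1/6) / -(1/π ^ 2) = π ^ 2 / 6 := by
      field_simp
    rw [hval] at this
    apply this.congr'
    filter_upwards [self_mem_nhdsWithin] with x hx
    have hx0 : x ≠ 0 := ne_of_gt hx
    have hx2 : (x:ℝ) ^ 2 ≠ 0 := pow_ne_zero 2 hx0
    simp only [Pi.div_apply]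
    rw [div_div_div_comm, div_self hx2, div_one]
  · -- limit at π⁻
    set f := fun x : ℝ => Real.log (Real.sin x / x)
    set g := fun x : ℝ => Real.log ((π ^ 2 - x ^ 2) / π ^ 2)
    have hmem : Set.Ioo (π/2) π ∈ 𝓝[<] π :=
      Ioo_mem_nhdsLT_of_mem (by constructor; linarith; rfl)
    -- g → -∞
    have hg : Tendsto g (𝓝[<] π) atBot := by
      apply Real.tendsto_log_nhdsGT_zero.comp
      rw [tendsto_nhdsWithin_iff]
      constructor
      · have : Tendsto (fun x : ℝ => (π ^ 2 - x ^ 2) / π ^ 2) (𝓝 π) (𝓝 ((π ^ 2 - π ^ 2) / π ^ 2)) :=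
          (tendsto_const_nhds.sub ((continuous_pow 2).tendsto π)).div_const _
        simpa using this.mono_left nhdsWithin_le_nhds
      · filter_upwards [hmem] with x hx
        have hx0 : (0:ℝ) < x := lt_trans (by linarith) hx.1
        have : x ^ 2 < π ^ 2 := by nlinarith [hx.2]
        exact Set.mem_Ioi.mpr (div_pos (by linarith) hπ2)
    -- f - g → -log 2
    have hfg : Tendsto (fun x => f x - g x) (𝓝[<] π) (𝓝 (-Real.log 2)) := by
      have hq : Tendsto (fun x : ℝ => Real.sin x / (π - x)) (𝓝[<] π) (𝓝 1) := by
        have hs : Tendsto (fun y : ℝ => Real.sin y / y) (𝓝[≠] (0:ℝ)) (𝓝 1) := aux_sin_slope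
        have hc : Tendsto (fun x : ℝ => π - x) (𝓝[<] π) (𝓝[≠] (0:ℝ)) := by
          rw [tendsto_nhdsWithin_iff]
          constructor
          · have : Tendsto (fun x : ℝ => π - x) (𝓝 π) (𝓝 (π - π)) :=
              tendsto_const_nhds.sub tendsto_id
            simpa using this.mono_left nhdsWithin_le_nhds
          · filter_upwards [self_mem_nhdsWithin] with x hx
            have : (0:ℝ) < π - x := by simpa using hx
            exact ne_of_gt this
        have := hs.comp hc
        apply this.congr
        intro x
        simp [Real.sin_pi_sub]
      have hr : Tendsto (fun x : ℝ => π ^ 2 / (x * (π + x))) (𝓝[<] π) (𝓝 (1/2)) := by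
        have : Tendsto (fun x : ℝ => π ^ 2 / (x * (π + x))) (𝓝 π) (𝓝 (π ^ 2 / (π * (π + π)))) := by
          apply tendsto_const_nhds.div
          · exact tendsto_id.mul (tendsto_const_nhds.add tendsto_id)
          · have : (0:ℝ) < π * (π + π) := by positivity
            exact ne_of_gt this
        have hv : π ^ 2 / (π * (π + π)) = (1:ℝ)/2 := by
          field_simp
          ring
        rw [hv] at this
        exact this.mono_left nhdsWithin_le_nhds
      have hprod := hq.mul hr
      have hlog : Tendsto (fun x : ℝ => Real.log (Real.sin x / (π - x) * (π ^ 2 / (x * (π + x)))))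
          (𝓝[<] π) (𝓝 (Real.log (1 * (1/2)))) := by
        apply (Real.continuousAt_log (by norm_num)).tendsto.comp
        rw [one_mul] at hprod ⊢
        exact hprod
      have hval : Real.log (1 * (1/2 : ℝ)) = -Real.log 2 := by
        rw [one_mul]
        rw [show (1/2 : ℝ) = 2⁻¹ by norm_num, Real.log_inv]
      rw [hval] at hlog
      apply hlog.congr'
      filter_upwards [hmem] with x hx
      obtain ⟨hx1, hx2⟩ := hx
      have hx0 : (0:ℝ) < x := lt_trans (by linarith) hx1
      have hsin : 0 < Real.sin x := Real.sin_pos_of_pos_of_lt_pi hx0 hx2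
      have hπx : 0 < π - x := by linarith
      have hπ2x : 0 < π ^ 2 - x ^ 2 := by nlinarith
      have ha : Real.sin x / x ≠ 0 := by positivity
      have hb : (π ^ 2 - x ^ 2) / π ^ 2 ≠ 0 := by positivity
      show Real.log _ = f x - g x
      rw [show f x - g x = Real.log ((Real.sin x / x) / ((π ^ 2 - x ^ 2) / π ^ 2)) by
        rw [Real.log_div ha hb]]
      congr 1
      have h1 : π ^ 2 - x ^ 2 = (π - x) * (π + x) := by ring
      field_simp
      ring
    -- combine
    have hgtop : Tendsto (fun x => -g x) (𝓝[<] π) atTop := tendsto_neg_atBot_atTop.comp hg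
    have hzero : Tendsto (fun x => (f x - g x) / g x) (𝓝[<] π) (𝓝 0) := by
      have h1 : Tendsto (fun x => (f x - g x) / (-g x)) (𝓝[<] π) (𝓝 0) :=
        hfg.div_atTop hgtop
      have h2 := h1.neg
      rw [neg_zero] at h2
      apply h2.congr
      intro x
      rw [div_neg, neg_neg]
    have hfinal := hzero.add_const 1
    rw [zero_add] at hfinal
    apply hfinal.congr'
    have hgne : ∀ᶠ x in 𝓝[<] π, g x ≠ 0 := by
      filter_upwards [hg.eventually (eventually_lt_atBot 0)] with x hx
      exact ne_of_lt hx
    filter_upwards [hgne] with x hx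
    show (f x - g x) / g x + 1 = f x / g x
    rw [div_add_one hx, sub_add_cancel]
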